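/- arXiv:2605.09183 — 2 statements merged into one kernel-verified Lean document; each statement's English description precedes it below -/
import Mathlib

section
/- Let M, n be positive integers, T ⊆ [M]^n a finite nonempty set of vectors, and ε ∈ (0,1). Set K = ⌈1/ε⌉. Then there exists a probability distribution q over subsets S ⊆ T of size at most K such that for every τ ∈ T, E_{S∼q}[ (1/n) Σ_{i=1}^n 1[min_{v∈S} v_i > τ_i] ] < ε. -/
open Finset



lemma my_minimax {ι κ : Type*} [Fintype ι] [Fintype κ] [Nonempty ι] [Nonempty κ]
    (g : ι → κ → ℝ) (c : ℝ)
    (h : ∀ p : ι → ℝ, (∀ i, 0 ≤ p i) → ∑ i, p i = 1 → ∃ s, ∑ i, p i * g i s ≤ c) :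
    ∃ q : κ → ℝ, (∀ s, 0 ≤ q s) ∧ ∑ s, q s = 1 ∧ ∀ i, ∑ s, q s * g i s ≤ c := by
  classical
  set L : (κ → ℝ) →ₗ[ℝ] (ι → ℝ) :=
    { toFun := fun q i => ∑ s, q s * g i s
      map_add' := by
        intro x y; funext i; simp [add_mul, Finset.sum_add_distrib]
      map_smul' := by
        intro m x; funext i; simp [Finset.mul_sum, mul_assoc] } with hL
  set C : Set (ι → ℝ) := L '' stdSimplex ℝ κ with hC
  set D : Set (ι → ℝ) := Set.pi Set.univ (fun _ : ι => Set.Iic c) with hD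
  by_cases hint : (C ∩ D).Nonempty
  · obtain ⟨x, ⟨q, hq, rfl⟩, hxD⟩ := hint
    exact ⟨q, hq.1, hq.2, fun i => hxD i (Set.mem_univ i)⟩
  · exfalso
    have hdisj : Disjoint C D :=
      Set.disjoint_iff_inter_eq_empty.mpr (Set.not_nonempty_iff_eq_empty.mp hint)
    have hCconv : Convex ℝ C := (convex_stdSimplex ℝ κ).linear_image L
    have hCcomp : IsCompact C :=
      (isCompact_stdSimplex ℝ κ).image L.continuous_of_finiteDimensional
    have hDconv : Convex ℝ D := convex_pi (fun i _ => convex_Iic c)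
    have hDclosed : IsClosed D := isClosed_set_pi (fun i _ => isClosed_Iic)
    obtain ⟨f, u, v, hfC, huv, hfD⟩ :=
      geometric_hahn_banach_compact_closed hCconv hCcomp hDconv hDclosed hdisj
    set lam : ι → ℝ := fun i => f (Pi.single i 1) with hlam
    have hf_eval : ∀ x : ι → ℝ, f x = ∑ i, x i * lam i := by
      intro x
      have hx : x = ∑ i, x i • (Pi.single i 1 : ι → ℝ) := by
        funext j
        simp [Pi.single_apply, Finset.sum_apply]
      conv_lhs => rw [hx]
      rw [map_sum]
      simp [hlam]
    have hcD : (fun _ => c) ∈ D := fun i _ => Set.mem_Iic.mpr le_rfl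
    have hfc := hfD _ hcD
    have hconst : f (fun _ => c) = c * ∑ i, lam i := by
      rw [hf_eval, Finset.mul_sum]
    rw [hconst] at hfc
    have hlam_nonpos : ∀ i, lam i ≤ 0 := by
      intro i
      by_contra hpos
      push_neg at hpos
      set μ : ℝ := (c * (∑ j, lam j) - v) / lam i with hμdef
      have hμ0 : 0 ≤ μ := le_of_lt (div_pos (by linarith) hpos)
      set b : ι → ℝ := fun j => c - (if j = i then μ else 0) with hb
      have hbD : b ∈ D := by
        intro j _
        rcases eq_or_ne j i with rfl | hne
        · simp [hb, Set.mem_Iic]; linarith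
        · simp [hb, hne, Set.mem_Iic]
      have hfb : f b = c * (∑ j, lam j) - μ * lam i := by
        rw [hf_eval]
        have : ∀ j, b j * lam j = c * lam j - (if j = i then μ * lam i else 0) := by
          intro j
          rcases eq_or_ne j i with rfl | hne
          · simp [hb]; ring
          · simp [hb, hne]
        simp only [this, Finset.sum_sub_distrib, Finset.sum_ite_eq' Finset.univ i
          (fun _ => μ * lam i), Finset.mem_univ, if_true, Finset.mul_sum]
      have hv := hfD _ hbD
      rw [hfb, hμdef, div_mul_cancel₀ _ (ne_of_gt hpos)] at hv
      linarith
    have hCne : C.Nonempty := by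
      obtain ⟨s⟩ := ‹Nonempty κ›
      exact ⟨L (fun t => if s = t then 1 else 0), ⟨_, ite_eq_mem_stdSimplex ℝ s, rfl⟩⟩
    obtain ⟨a, haC⟩ := hCne
    have hsum_neg : ∑ i, lam i < 0 := by
      rcases lt_or_eq_of_le (Finset.sum_nonpos (fun i _ => hlam_nonpos i)) with h1 | h1
      · exact h1
      · exfalso
        have hall : ∀ i ∈ Finset.univ, lam i = 0 :=
          (Finset.sum_eq_zero_iff_of_nonpos (fun i _ => hlam_nonpos i)).mp h1
        have hfa : f a = 0 := by
          rw [hf_eval, Finset.sum_eq_zero]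
          intro i _; rw [hall i (Finset.mem_univ i), mul_zero]
        have hzero : (∑ i, lam i) = 0 := h1
        have := hfC a haC
        rw [hfa] at this
        rw [hzero, mul_zero] at hfc
        linarith
    set σ := ∑ i, lam i with hσ
    set p : ι → ℝ := fun i => lam i / σ with hp
    have hp0 : ∀ i, 0 ≤ p i := fun i =>
      div_nonneg_of_nonpos (hlam_nonpos i) hsum_neg.le
    have hp1 : ∑ i, p i = 1 := by
      rw [hp]; rw [← Finset.sum_div, div_self hsum_neg.ne]
    obtain ⟨s, hs⟩ := h p hp0 hp1
    have hmemC : L (fun t => if s = t then 1 else 0) ∈ C :=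
      ⟨_, ite_eq_mem_stdSimplex ℝ s, rfl⟩
    have heval : f (L (fun t => if s = t then 1 else 0)) = ∑ i, g i s * lam i := by
      rw [hf_eval]
      refine Finset.sum_congr rfl (fun i _ => ?_)
      congr 1
      simp [hL]
    have hlt := hfC _ hmemC
    rw [heval] at hlt
    have key : ∑ i, p i * g i s = (∑ i, g i s * lam i) / σ := by
      rw [hp, Finset.sum_div]
      refine Finset.sum_congr rfl (fun i _ => ?_)
      ring
    rw [key] at hs
    have hge : (∑ i, g i s * lam i) ≥ c * σ := by
      rw [ge_iff_le, ← div_le_iff_of_neg hsum_neg]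
      exact hs
    linarith



lemma my_exchange {ι : Type*} [Fintype ι] {β : Type*} [LinearOrder β] (K : ℕ)
    (p : ι → ℝ) (hp0 : ∀ i, 0 ≤ p i) (hp1 : ∑ i, p i = 1) (h : ι → β) :
    ∑ w : Fin (K+1) → ι, (∏ k, p (w k)) *
      (if ∀ k ≠ 0, h (w 0) < h (w k) then (1:ℝ) else 0) ≤ 1 / (K+1) := by
  classical
  set A : Fin (K+1) → ℝ := fun m => ∑ w : Fin (K+1) → ι, (∏ k, p (w k)) *
      (if ∀ k ≠ m, h (w m) < h (w k) then (1:ℝ) else 0) with hA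
  have hswap : ∀ m, A m = A 0 := by
    intro m
    rw [hA]
    simp only
    rw [← Equiv.sum_comp (Equiv.arrowCongr (Equiv.swap (0:Fin (K+1)) m) (Equiv.refl ι))
      (fun w => (∏ k, p (w k)) * (if ∀ k ≠ m, h (w m) < h (w k) then (1:ℝ) else 0))]
    refine Finset.sum_congr rfl (fun w _ => ?_)
    have hfun : ∀ k, (Equiv.arrowCongr (Equiv.swap (0:Fin (K+1)) m) (Equiv.refl ι)) w k
        = w (Equiv.swap (0:Fin (K+1)) m k) := by
      intro k; simp [Equiv.arrowCongr, Equiv.symm_swap]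
    have hprod : (∏ k, p ((Equiv.arrowCongr (Equiv.swap (0:Fin (K+1)) m) (Equiv.refl ι)) w k))
        = ∏ k, p (w k) := by
      simp only [hfun]
      exact Equiv.prod_comp (Equiv.swap (0:Fin (K+1)) m) (fun k => p (w k))
    rw [hprod]
    congr 1
    refine if_congr ?_ rfl rfl
    have hm : (Equiv.arrowCongr (Equiv.swap (0:Fin (K+1)) m) (Equiv.refl ι)) w m = w 0 := by
      rw [hfun, Equiv.swap_apply_right]
    simp only [hfun, Equiv.swap_apply_right]
    constructor
    · intro hcond k hk
      have hne : Equiv.swap (0:Fin (K+1)) m k ≠ m := by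
        intro hc
        apply hk
        have := congrArg (Equiv.swap (0:Fin (K+1)) m) hc
        rwa [Equiv.swap_apply_self, Equiv.swap_apply_right] at this
      have := hcond (Equiv.swap (0:Fin (K+1)) m k) hne
      rwa [Equiv.swap_apply_self] at this
    · intro hcond k hk
      have hne : Equiv.swap (0:Fin (K+1)) m k ≠ 0 := by
        intro hc
        apply hk
        have := congrArg (Equiv.swap (0:Fin (K+1)) m) hc
        rwa [Equiv.swap_apply_self, Equiv.swap_apply_left] at this
      exact hcond _ hne
  have hdisj : ∑ m, A m ≤ 1 := by
    rw [hA]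
    simp only
    rw [Finset.sum_comm]
    have htot : ∑ w : Fin (K+1) → ι, (∏ k, p (w k)) = 1 := by
      rw [← Fintype.prod_sum (fun (_ : Fin (K+1)) (i : ι) => p i)]
      simp [hp1]
    calc ∑ w : Fin (K+1) → ι, ∑ m, (∏ k, p (w k)) *
          (if ∀ k ≠ m, h (w m) < h (w k) then (1:ℝ) else 0)
        ≤ ∑ w : Fin (K+1) → ι, (∏ k, p (w k)) := by
          refine Finset.sum_le_sum (fun w _ => ?_)
          rw [← Finset.mul_sum]
          have hprod0 : 0 ≤ ∏ k, p (w k) := Finset.prod_nonneg (fun k _ => hp0 _)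
          have hind : (∑ m, (if ∀ k ≠ m, h (w m) < h (w k) then (1:ℝ) else 0)) ≤ 1 := by
            by_cases hex : ∃ m, ∀ k ≠ m, h (w m) < h (w k)
            · obtain ⟨m₀, hm₀⟩ := hex
              have huniq : ∀ m, (∀ k ≠ m, h (w m) < h (w k)) ↔ m = m₀ := by
                intro m
                constructor
                · intro hm
                  by_contra hne
                  have h1 := hm₀ m hne
                  have h2 := hm m₀ (fun hc => hne hc.symm)
                  exact absurd h1 (not_lt.mpr h2.le)
                · rintro rfl; exact hm₀
              calc (∑ m, (if ∀ k ≠ m, h (w m) < h (w k) then (1:ℝ) else 0))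
                  = ∑ m, (if m = m₀ then (1:ℝ) else 0) := by
                    refine Finset.sum_congr rfl (fun m _ => ?_)
                    exact if_congr (huniq m) rfl rfl
                _ = 1 := by simp
                _ ≤ 1 := le_rfl
            · push_neg at hex
              rw [Finset.sum_eq_zero]
              · norm_num
              · intro m _
                rw [if_neg]
                intro hc
                obtain ⟨k, hk1, hk2⟩ := hex m
                exact absurd (hc k hk1) (not_lt.mpr hk2)
          nlinarith [hind]
      _ = 1 := htot
  have hAeq : ∑ m, A m = (K+1) * A 0 := by
    rw [Finset.sum_congr rfl (fun m _ => hswap m)]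
    simp [Finset.card_univ, mul_comm]
  have hfin : (K+1 : ℝ) * A 0 ≤ 1 := by rw [← hAeq]; exact hdisj
  have hK1 : (0:ℝ) < K+1 := by positivity
  calc A 0 ≤ 1 / (K+1) := by rw [le_div_iff₀ hK1]; linarith [hfin]

lemma my_keyA {M n K : ℕ} (hn : 0 < n) (hK : 0 < K)
    {T : Finset (Fin n → Fin M)} (hT : T.Nonempty)
    (p : ↥T → ℝ) (hp0 : ∀ i, 0 ≤ p i) (hp1 : ∑ i, p i = 1) :
    ∃ S : Finset (Fin n → Fin M), ↑S ⊆ (T : Set (Fin n → Fin M)) ∧ S.Nonempty ∧ S.card ≤ K ∧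
      ∑ τ : ↥T, p τ *
        ((1/(n:ℝ)) * ∑ i, (if ∀ v ∈ S, (τ : Fin n → Fin M) i < v i then (1:ℝ) else 0))
        ≤ 1/(K+1) := by
  classical
  haveI : Nonempty ↥T := hT.to_subtype
  set Sof : (Fin K → ↥T) → Finset (Fin n → Fin M) :=
    fun w => Finset.image (fun j => (↑(w j) : Fin n → Fin M)) univ with hSof
  set P : (Fin K → ↥T) → ℝ := fun w => ∏ j, p (w j) with hP
  set ind : ↥T → (Fin K → ↥T) → Fin n → ℝ :=
    fun τ w i => if ∀ v ∈ Sof w, (τ : Fin n → Fin M) i < v i then (1:ℝ) else 0 with hind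
  set inner : (Fin K → ↥T) → ℝ := fun w => ∑ τ : ↥T, p τ *
      ((1/(n:ℝ)) * ∑ i, ind τ w i) with hinner
  have hP0 : ∀ w, 0 ≤ P w := fun w => Finset.prod_nonneg (fun j _ => hp0 _)
  have hPtot : ∑ w : Fin K → ↥T, P w = 1 := by
    rw [hP, ← Fintype.prod_sum (fun (_ : Fin K) (i : ↥T) => p i)]
    have h' : ∑ j ∈ T.attach, p j = 1 := by rwa [← Finset.univ_eq_attach]
    simp [h', hp1]
  have hmain : ∑ w : Fin K → ↥T, P w * inner w ≤ 1/(K+1) := by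
    have hstep : ∀ i : Fin n,
        ∑ w : Fin K → ↥T, ∑ τ : ↥T, P w * (p τ * ind τ w i) ≤ 1/(K+1) := by
      intro i
      have hcore := my_exchange (β := Fin M) K p hp0 hp1
        (fun τ => (τ : Fin n → Fin M) i)
      refine le_trans (le_of_eq ?_) hcore
      rw [← Equiv.sum_comp (Fin.consEquiv (fun _ : Fin (K+1) => ↥T))
        (fun u => (∏ k, p (u k)) *
          (if ∀ k ≠ 0, (↑(u 0) : Fin n → Fin M) i < (↑(u k) : Fin n → Fin M) i
            then (1:ℝ) else 0))]
      rw [Fintype.sum_prod_type, Finset.sum_comm]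
      refine Finset.sum_congr rfl (fun τ _ => Finset.sum_congr rfl (fun w _ => ?_))
      set u : Fin (K+1) → ↥T := (Fin.consEquiv (fun _ : Fin (K+1) => ↥T)) (τ, w) with hu
      have hu0 : u 0 = τ := rfl
      have hus : ∀ j : Fin K, u j.succ = w j := fun j => rfl
      have hprod : (∏ k, p (u k)) = p τ * ∏ j, p (w j) := by
        rw [Fin.prod_univ_succ, hu0]
        rfl
      rw [hprod]
      have hiff : (∀ k ≠ 0, (↑(u 0) : Fin n → Fin M) i < (↑(u k) : Fin n → Fin M) i)
          ↔ (∀ v ∈ Sof w, (τ : Fin n → Fin M) i < v i) := by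
        rw [hu0]
        constructor
        · intro hc v hv
          rw [hSof, Finset.mem_image] at hv
          obtain ⟨j, -, rfl⟩ := hv
          have := hc j.succ (Fin.succ_ne_zero j)
          rwa [hus] at this
        · intro hc k hk
          obtain ⟨j, rfl⟩ := Fin.eq_succ_of_ne_zero hk
          rw [hus]
          exact hc _ (Finset.mem_image_of_mem _ (Finset.mem_univ j))
      rw [hind]
      simp only
      rw [if_congr hiff rfl rfl]
      ring
    have hw : ∀ w, P w * inner w = ∑ i, ∑ τ : ↥T, (1/(n:ℝ)) * (P w * (p τ * ind τ w i)) := by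
      intro w
      rw [hinner]
      simp only
      rw [Finset.mul_sum]
      have hτ : ∀ τ : ↥T, P w * (p τ * ((1/(n:ℝ)) * ∑ i, ind τ w i))
          = ∑ i, (1/(n:ℝ)) * (P w * (p τ * ind τ w i)) := by
        intro τ
        rw [Finset.mul_sum, Finset.mul_sum, Finset.mul_sum]
        exact Finset.sum_congr rfl (fun i _ => by ring)
      rw [Finset.sum_congr rfl (fun τ _ => hτ τ), Finset.sum_comm]
    calc ∑ w : Fin K → ↥T, P w * inner w
        = ∑ w : Fin K → ↥T, ∑ i, ∑ τ : ↥T, (1/(n:ℝ)) * (P w * (p τ * ind τ w i)) :=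
          Finset.sum_congr rfl (fun w _ => hw w)
      _ = ∑ i, ∑ w : Fin K → ↥T, ∑ τ : ↥T, (1/(n:ℝ)) * (P w * (p τ * ind τ w i)) :=
          Finset.sum_comm
      _ ≤ ∑ i : Fin n, (1/(n:ℝ)) * (1/(K+1)) := by
          refine Finset.sum_le_sum (fun i _ => ?_)
          have : ∑ w : Fin K → ↥T, ∑ τ : ↥T, (1/(n:ℝ)) * (P w * (p τ * ind τ w i))
              = (1/(n:ℝ)) * ∑ w : Fin K → ↥T, ∑ τ : ↥T, P w * (p τ * ind τ w i) := by
            rw [Finset.mul_sum]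
            exact Finset.sum_congr rfl (fun w _ => by rw [Finset.mul_sum])
          rw [this]
          have h1n : (0:ℝ) ≤ 1/(n:ℝ) := by positivity
          exact mul_le_mul_of_nonneg_left (hstep i) h1n
      _ = 1/(K+1) := by
          rw [Finset.sum_const, Finset.card_univ, Fintype.card_fin, nsmul_eq_mul]
          have hn' : (n:ℝ) ≠ 0 := Nat.cast_ne_zero.mpr hn.ne'
          field_simp
  by_contra hcon
  push_neg at hcon
  have hlt : ∀ w : Fin K → ↥T, 1/((K:ℝ)+1) < inner w := by
    intro w
    refine hcon (Sof w) ?_ ?_ ?_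
    · intro v hv
      rw [hSof] at hv
      simp only [Finset.coe_image, Set.mem_image] at hv
      obtain ⟨j, -, rfl⟩ := hv
      exact (w j).2
    · exact ⟨↑(w ⟨0, hK⟩), Finset.mem_image_of_mem _ (Finset.mem_univ _)⟩
    · exact le_trans Finset.card_image_le (by simp)
  obtain ⟨w₀, hw₀⟩ : ∃ w : Fin K → ↥T, P w ≠ 0 := by
    by_contra hall
    push_neg at hall
    rw [Finset.sum_eq_zero (fun w _ => hall w)] at hPtot
    norm_num at hPtot
  have hs : ∑ w : Fin K → ↥T, (1/((K:ℝ)+1)) * P w < ∑ w : Fin K → ↥T, inner w * P w := by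
    refine Finset.sum_lt_sum (fun w _ => ?_) ⟨w₀, Finset.mem_univ w₀, ?_⟩
    · exact mul_le_mul_of_nonneg_right (hlt w).le (hP0 w)
    · exact mul_lt_mul_of_pos_right (hlt w₀) (lt_of_le_of_ne (hP0 w₀) (Ne.symm hw₀))
  rw [← Finset.mul_sum, hPtot, mul_one] at hs
  have hfin : ∑ w : Fin K → ↥T, inner w * P w = ∑ w : Fin K → ↥T, P w * inner w :=
    Finset.sum_congr rfl (fun w _ => mul_comm _ _)
  rw [hfin] at hs
  linarith


/-- Existence of a sparse valid validator distribution (Lemma: generalized sparse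
selective policies). For a finite nonempty set `T` of vectors in `[M]^n` and
`ε ∈ (0,1)`, with `K = ⌈1/ε⌉`, there is a distribution over nonempty subsets
`S ⊆ T` of size at most `K` such that for every `τ ∈ T` the expected fraction of
coordinates where `min_{v ∈ S} v_i > τ_i` is less than `ε`. -/
theorem stmt1 (M n : ℕ) (hM : 0 < M) (hn : 0 < n)
    (T : Finset (Fin n → Fin M)) (hT : T.Nonempty)
    (ε : ℝ) (hε : ε ∈ Set.Ioo (0 : ℝ) 1) :
    ∃ q : PMF {S : Finset (Fin n → Fin M) //
        ↑S ⊆ (T : Set (Fin n → Fin M)) ∧ S.Nonempty ∧ S.card ≤ ⌈1 / ε⌉₊},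
      ∀ τ ∈ T,
        (∑' S, (q S).toReal *
          ((1 / (n : ℝ)) * ∑ i, (if ∀ v ∈ S.1, τ i < v i then (1 : ℝ) else 0))) < ε := by
  classical
  obtain ⟨hε0, hε1⟩ := hε
  set K : ℕ := ⌈1 / ε⌉₊ with hKdef
  have hK : 0 < K := Nat.ceil_pos.mpr (by positivity)
  set κ := {S : Finset (Fin n → Fin M) //
      ↑S ⊆ (T : Set (Fin n → Fin M)) ∧ S.Nonempty ∧ S.card ≤ K} with hκ
  haveI : Nonempty ↥T := hT.to_subtype
  haveI : Nonempty κ := by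
    obtain ⟨t, ht⟩ := hT
    exact ⟨⟨{t}, by simpa using ht, Finset.singleton_nonempty t, by simpa using Nat.one_le_iff_ne_zero.mpr hK.ne'⟩⟩
  set g : ↥T → κ → ℝ := fun τ S =>
    (1 / (n : ℝ)) * ∑ i, (if ∀ v ∈ S.1, (τ : Fin n → Fin M) i < v i then (1:ℝ) else 0)
    with hg
  have hmm := my_minimax g (1/((K:ℝ)+1)) ?_
  · obtain ⟨q, hq0, hq1, hqle⟩ := hmm
    have hsum1 : ∑ S : κ, ENNReal.ofReal (q S) = 1 := by
      rw [← ENNReal.ofReal_sum_of_nonneg (fun S _ => hq0 S), hq1, ENNReal.ofReal_one]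
    refine ⟨PMF.ofFintype (fun S => ENNReal.ofReal (q S)) hsum1, ?_⟩
    intro τ hτ
    have hεK : 1/((K:ℝ)+1) < ε := by
      have h1 : 1/ε ≤ (K:ℝ) := Nat.le_ceil (1/ε)
      rw [div_lt_iff₀ (by positivity)]
      have := mul_le_mul_of_nonneg_right h1 hε0.le
      rw [one_div, inv_mul_cancel₀ hε0.ne'] at this
      nlinarith
    rw [tsum_fintype]
    calc ∑ S : κ, ((PMF.ofFintype (fun S => ENNReal.ofReal (q S)) hsum1) S).toReal *
          ((1 / (n : ℝ)) * ∑ i, (if ∀ v ∈ S.1, τ i < v i then (1:ℝ) else 0))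
        = ∑ S : κ, q S * g ⟨τ, hτ⟩ S := by
          refine Finset.sum_congr rfl (fun S _ => ?_)
          rw [PMF.ofFintype_apply, ENNReal.toReal_ofReal (hq0 S)]
      _ ≤ 1/((K:ℝ)+1) := hqle ⟨τ, hτ⟩
      _ < ε := hεK
  · intro p hp0 hp1
    obtain ⟨S, hS1, hS2, hS3, hS4⟩ := my_keyA hn hK hT p hp0 hp1
    exact ⟨⟨S, hS1, hS2, hS3⟩, hS4⟩
end

section
/- Let p and q be probability distributions on a countable set. Define the geometric mixture p̄ by p̄(a) = √(p(a)q(a)) / Z where Z = Σ_a √(p(a)q(a)) (assume Z > 0). Let D_H²(p,q) = 1 − Σ_a √(p(a)q(a)) denote the squared Hellinger distance. Then D_H²(p̄, q) ≤ (3/2) · D_H²(p, q). -/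
open Real

/-- Geometric mixture Hellinger bound: if `p̄(a) = √(p(a)q(a)) / Z` with
`Z = Σ_a √(p(a)q(a)) > 0`, then `D_H²(p̄, q) ≤ (3/2)·D_H²(p, q)`, where
`D_H²(f,g) = 1 - Σ_a √(f(a)g(a))`. -/
theorem stmt3 {α : Type*} [Countable α] (p q : α → ℝ)
    (hp0 : ∀ a, 0 ≤ p a) (hq0 : ∀ a, 0 ≤ q a)
    (hp1 : HasSum p 1) (hq1 : HasSum q 1)
    (Z : ℝ) (hZ : Z = ∑' a, Real.sqrt (p a * q a)) (hZpos : 0 < Z) :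
    1 - ∑' a, Real.sqrt ((Real.sqrt (p a * q a) / Z) * q a)
      ≤ (3 / 2) * (1 - ∑' a, Real.sqrt (p a * q a)) := by
  set s : α → ℝ := fun a => Real.sqrt ((Real.sqrt (p a * q a) / Z) * q a) with hs
  set g : α → ℝ := fun a => Real.sqrt (p a * q a) with hg
  have hsp : Summable p := hp1.summable
  have hsq : Summable q := hq1.summable
  have hg0 : ∀ a, 0 ≤ g a := fun a => Real.sqrt_nonneg _
  have hs0 : ∀ a, 0 ≤ s a := fun a => Real.sqrt_nonneg _
  -- g is dominated by (p+q)/2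
  have hgle : ∀ a, g a ≤ (p a + q a) / 2 := by
    intro a
    have h1 : g a = Real.sqrt (p a) * Real.sqrt (q a) := Real.sqrt_mul (hp0 a) _
    nlinarith [sq_nonneg (Real.sqrt (p a) - Real.sqrt (q a)),
      Real.sq_sqrt (hp0 a), Real.sq_sqrt (hq0 a)]
  have hsumg : Summable g :=
    Summable.of_nonneg_of_le hg0 hgle (by simpa using (hsp.add hsq).div_const 2)
  -- s is dominated by (g/Z + q)/2
  have hsle : ∀ a, s a ≤ (g a / Z + q a) / 2 := by
    intro a
    have h1 : s a = Real.sqrt (g a / Z) * Real.sqrt (q a) :=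
      Real.sqrt_mul (by positivity) _
    nlinarith [sq_nonneg (Real.sqrt (g a / Z) - Real.sqrt (q a)),
      Real.sq_sqrt (show (0:ℝ) ≤ g a / Z by positivity), Real.sq_sqrt (hq0 a)]
  have hsums : Summable s :=
    Summable.of_nonneg_of_le hs0 hsle (by simpa using ((hsumg.div_const Z).add hsq).div_const 2)
  -- Z ≤ 1
  have hZ1 : Z ≤ 1 := by
    rw [hZ]
    calc ∑' a, g a ≤ ∑' a, (p a + q a) / 2 :=
          Summable.tsum_le_tsum hgle hsumg (by simpa using (hsp.add hsq).div_const 2)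
      _ = 1 := by
          rw [tsum_div_const, (hp1.add hq1).tsum_eq]; norm_num
  -- pointwise: g a ≤ (2/3) * s a + (1/3) * (Z * p a)
  have key : ∀ a, g a ≤ 2/3 * s a + 1/3 * (Z * p a) := by
    intro a
    have hge := Real.geom_mean_le_arith_mean2_weighted (by norm_num : (0:ℝ) ≤ 2/3)
      (by norm_num : (0:ℝ) ≤ 1/3) (hs0 a) (mul_nonneg hZpos.le (hp0 a))
      (by norm_num)
    refine le_trans (le_of_eq ?_) hge
    have h2 : (s a) ^ ((2:ℝ)/3) = ((s a)^2) ^ ((1:ℝ)/3) := by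
      rw [← Real.rpow_natCast (s a) 2, ← Real.rpow_mul (hs0 a)]
      norm_num
    have hsq2 : (s a) ^ 2 = g a / Z * q a :=
      Real.sq_sqrt (mul_nonneg (div_nonneg (hg0 a) hZpos.le) (hq0 a))
    have h3 : (s a)^2 * (Z * p a) = (g a) ^ 3 := by
      rw [hsq2]
      have hgg : (g a) ^ 2 = p a * q a := Real.sq_sqrt (mul_nonneg (hp0 a) (hq0 a))
      field_simp
      linear_combination (-(g a)) * hgg
    rw [h2, ← Real.mul_rpow (sq_nonneg _) (mul_nonneg hZpos.le (hp0 a)), h3,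
      ← Real.rpow_natCast (g a) 3, ← Real.rpow_mul (hg0 a)]
    norm_num
  -- sum it up: Z ≤ (2/3) T + (1/3) Z
  have hsum : Z ≤ 2/3 * (∑' a, s a) + 1/3 * Z := by
    calc Z = ∑' a, g a := hZ
      _ ≤ ∑' a, (2/3 * s a + 1/3 * (Z * p a)) :=
          Summable.tsum_le_tsum key hsumg (((hsums.mul_left _).add ((hsp.mul_left Z).mul_left _)))
      _ = 2/3 * (∑' a, s a) + 1/3 * Z := by
          rw [Summable.tsum_add (hsums.mul_left _) ((hsp.mul_left Z).mul_left _),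
            tsum_mul_left, tsum_mul_left, tsum_mul_left, hp1.tsum_eq]
          rw [hZ]; ring
  have hT : Z ≤ ∑' a, s a := by linarith
  rw [← hZ]
  linarith
end
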